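/- arXiv:1509.09289 — 3 statements merged into one kernel-verified Lean document; each statement's English description precedes it below -/
import Mathlib

section
/- Let F₁, F₂ be continuous functions on [0,∞) with |F_j(t)| ≤ C e^(Rt), and let P_j(ζ) = ζ ∫₀^∞ e^(-ζt) F_j(t) dt for Re(ζ) > R. If P₁(ζ) = P₂(ζ) for all ζ with Re(ζ) > R, then F₁(t) = F₂(t) for all t ≥ 0. -/
open MeasureTheory Set Complex

private lemma lap_integrable {F : ℝ → ℂ} {C R : ℝ} (hc : ContinuousOn F (Set.Ici 0))
    (hb : ∀ t, 0 ≤ t → ‖F t‖ ≤ C * Real.exp (R * t)) {ζ : ℂ} (hζ : R < ζ.re) :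
    IntegrableOn (fun t : ℝ => Complex.exp (-ζ * (t:ℂ)) * F t) (Set.Ioi (0:ℝ)) := by
  have hm : AEStronglyMeasurable (fun t : ℝ => Complex.exp (-ζ * (t:ℂ)) * F t)
      (volume.restrict (Set.Ioi (0:ℝ))) := by
    apply AEStronglyMeasurable.mul
    · exact (Complex.continuous_exp.comp (by continuity)).aestronglyMeasurable
    · exact ((hc.mono (Set.Ioi_subset_Ici le_rfl)).aestronglyMeasurable measurableSet_Ioi)
  apply Integrable.mono' (g := fun t : ℝ => C * Real.exp (-(ζ.re - R) * t))
  · exact (exp_neg_integrableOn_Ioi 0 (by linarith)).const_mul C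
  · exact hm
  · rw [ae_restrict_iff' measurableSet_Ioi]
    filter_upwards with t ht
    have ht' : (0:ℝ) ≤ t := le_of_lt ht
    have h1 : ‖Complex.exp (-ζ * (t:ℂ))‖ = Real.exp (-ζ.re * t) := by
      rw [Complex.norm_exp]
      congr 1
      simp [Complex.mul_re]
    rw [norm_mul, h1]
    calc Real.exp (-ζ.re * t) * ‖F t‖ ≤ Real.exp (-ζ.re * t) * (C * Real.exp (R * t)) := by
          exact mul_le_mul_of_nonneg_left (hb t ht') (Real.exp_nonneg _)
      _ = C * Real.exp (-(ζ.re - R) * t) := by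
          rw [show -(ζ.re - R) * t = -ζ.re * t + R * t by ring, Real.exp_add]; ring


lemma core {G : ℝ → ℂ} {C R : ℝ} (hR : 0 < R) (hC : 0 ≤ C)
    (hc : ContinuousOn G (Set.Ici 0))
    (hb : ∀ t, 0 ≤ t → ‖G t‖ ≤ C * Real.exp (R * t))
    (hz : ∀ ζ : ℂ, R < ζ.re → ∫ t in Set.Ioi (0:ℝ), Complex.exp (-ζ * (t:ℂ)) * G t = 0) :
    ∀ t, 0 ≤ t → G t = 0 := by
  set a : ℝ := R + 1 with ha
  set h : ℝ → ℂ := fun x => ((x ^ a : ℝ) : ℂ) * G (-Real.log x) with hh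
  -- bound
  have hbound : ∀ x ∈ Set.Icc (0:ℝ) 1, ‖h x‖ ≤ C * x := by
    rintro x ⟨hx0, hx1⟩
    rcases eq_or_lt_of_le hx0 with rfl | hx0
    · simp [hh, Real.zero_rpow (by positivity : a ≠ 0)]
    · have hlog : 0 ≤ -Real.log x := by
        simpa using Real.log_nonpos (le_of_lt hx0) hx1
      have h1 : ‖h x‖ = x ^ a * ‖G (-Real.log x)‖ := by
        rw [hh]; simp only [norm_mul, Complex.norm_real, Real.norm_eq_abs]
        rw [_root_.abs_of_nonneg (Real.rpow_nonneg hx0.le a)]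
      have h2 : Real.exp (R * -Real.log x) = x ^ (-R) := by
        rw [Real.rpow_def_of_pos hx0]; ring_nf
      have h3 : x ^ a * x ^ (-R) = x := by
        rw [← Real.rpow_add hx0, ha]; norm_num
      calc ‖h x‖ = x ^ a * ‖G (-Real.log x)‖ := h1
        _ ≤ x ^ a * (C * Real.exp (R * -Real.log x)) := by
            exact mul_le_mul_of_nonneg_left (hb _ hlog) (Real.rpow_nonneg hx0.le a)
        _ = C * (x ^ a * x ^ (-R)) := by rw [h2]; ring
        _ = C * x := by rw [h3]
  -- continuity
  have hcont : ContinuousOn h (Set.Icc 0 1) := by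
    intro x hx
    rcases eq_or_lt_of_le hx.1 with rfl | hx0
    · have h0 : h 0 = 0 := by simp [hh, Real.zero_rpow (by positivity : a ≠ 0)]
      rw [ContinuousWithinAt, h0]
      apply squeeze_zero_norm' (a := fun x : ℝ => C * x)
      · exact eventually_nhdsWithin_of_forall hbound
      · have : Filter.Tendsto (fun x : ℝ => C * x) (nhds 0) (nhds 0) := by
          simpa using (Filter.tendsto_id (x := nhds (0:ℝ))).const_mul C
        exact this.mono_left nhdsWithin_le_nhds
    · have hIoc : ContinuousOn h (Set.Ioc 0 1) := by
        apply ContinuousOn.mul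
        · exact Complex.continuous_ofReal.comp_continuousOn
            (continuousOn_id.rpow_const (fun y hy => Or.inl (ne_of_gt hy.1)))
        · apply hc.comp ((Real.continuousOn_log.mono (by intro y hy; simpa using ne_of_gt hy.1)).neg)
          intro y hy
          simpa using Real.log_nonpos hy.1.le hy.2
      refine (hIoc x ⟨hx0, hx.2⟩).mono_of_mem_nhdsWithin ?_
      rw [mem_nhdsWithin]
      exact ⟨Set.Ioi 0, isOpen_Ioi, hx0, fun y hy => ⟨hy.1, hy.2.2⟩⟩
  -- moments vanish
  have himg : (fun t : ℝ => Real.exp (-t)) '' (Set.Ioi 0) = Set.Ioo 0 1 := by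
    ext y
    constructor
    · rintro ⟨t, ht, rfl⟩
      exact ⟨Real.exp_pos _, Real.exp_lt_one_iff.mpr (by simpa using ht)⟩
    · rintro ⟨hy0, hy1⟩
      exact ⟨-Real.log y, by simpa using Real.log_neg hy0 hy1, by simp [Real.exp_log hy0]⟩
  have hmom : ∀ n : ℕ, ∫ x in Set.Ioo (0:ℝ) 1, (x:ℂ)^n * h x = 0 := by
    intro n
    have hderiv : ∀ t ∈ Set.Ioi (0:ℝ), HasDerivWithinAt (fun t : ℝ => Real.exp (-t))
        (-Real.exp (-t)) (Set.Ioi 0) t := by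
      intro t ht
      exact (((Real.hasDerivAt_exp (-t)).comp t (hasDerivAt_neg t)).congr_deriv (by simp)).hasDerivWithinAt
    have hinj : Set.InjOn (fun t : ℝ => Real.exp (-t)) (Set.Ioi 0) := by
      intro s _ t _ hst
      simpa using Real.exp_injective hst
    have key := MeasureTheory.integral_image_eq_integral_abs_deriv_smul measurableSet_Ioi hderiv
      hinj (fun x => (x:ℂ)^n * h x)
    rw [himg] at key
    rw [key, ← hz ((n + 1 + a : ℝ) : ℂ) (by rw [Complex.ofReal_re]; push_cast; linarith [Nat.cast_nonneg (α := ℝ) n])]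
    apply setIntegral_congr_fun measurableSet_Ioi
    intro t ht
    have e1 : Real.log (Real.exp (-t)) = -t := Real.log_exp _
    have e2 : (Real.exp (-t)) ^ a = Real.exp (-t * a) := by
      rw [Real.rpow_def_of_pos (Real.exp_pos _), e1]
    show |(-Real.exp (-t))| • ((Real.exp (-t) : ℂ)^n * h (Real.exp (-t))) = _
    rw [hh]
    simp only [e1, e2, neg_neg]
    rw [abs_neg, _root_.abs_of_pos (Real.exp_pos _), Complex.real_smul, Complex.ofReal_exp,
      Complex.ofReal_exp, ← Complex.exp_nat_mul]
    simp only [← mul_assoc, ← Complex.exp_add]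
    congr 2
    push_cast
    ring
  -- products with continuous functions are integrable
  have hprodint : ∀ f : ℝ → ℂ, ContinuousOn f (Set.Icc 0 1) →
      IntegrableOn (fun x => f x * h x) (Set.Ioo (0:ℝ) 1) := fun f hf =>
    ((hf.mul hcont).integrableOn_Icc).mono_set Set.Ioo_subset_Icc_self
  -- polynomial moments vanish
  have hpoly : ∀ p : Polynomial ℝ, ∫ x in Set.Ioo (0:ℝ) 1, ((p.eval x : ℝ) : ℂ) * h x = 0 := by
    intro p
    have expand : ∀ x ∈ Set.Ioo (0:ℝ) 1, ((p.eval x : ℝ) : ℂ) * h x =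
        ∑ i ∈ Finset.range (p.natDegree + 1), (p.coeff i : ℂ) * ((x:ℂ)^i * h x) := by
      intro x _
      rw [Polynomial.eval_eq_sum_range]
      push_cast
      rw [Finset.sum_mul]
      exact Finset.sum_congr rfl fun i _ => by ring
    rw [setIntegral_congr_fun measurableSet_Ioo expand, integral_finset_sum]
    · refine Finset.sum_eq_zero fun i _ => ?_
      rw [integral_const_mul, hmom i, mul_zero]
    · intro i _
      exact (hprodint _ ((Complex.continuous_ofReal.pow i).continuousOn)).const_mul _
  -- complex-combination moments vanish
  have hQ : ∀ p q : Polynomial ℝ, ∫ x in Set.Ioo (0:ℝ) 1,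
      (((p.eval x : ℝ) : ℂ) - Complex.I * ((q.eval x : ℝ) : ℂ)) * h x = 0 := by
    intro p q
    have hip : IntegrableOn (fun x => ((p.eval x : ℝ) : ℂ) * h x) (Set.Ioo (0:ℝ) 1) :=
      hprodint _ (Complex.continuous_ofReal.comp p.continuous).continuousOn
    have hiq : IntegrableOn (fun x => Complex.I * (((q.eval x : ℝ) : ℂ) * h x)) (Set.Ioo (0:ℝ) 1) :=
      (hprodint _ (Complex.continuous_ofReal.comp q.continuous).continuousOn).const_mul _
    have : ∀ x ∈ Set.Ioo (0:ℝ) 1, (((p.eval x : ℝ) : ℂ) - Complex.I * ((q.eval x : ℝ) : ℂ)) * h x =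
        ((p.eval x : ℝ) : ℂ) * h x - Complex.I * (((q.eval x : ℝ) : ℂ) * h x) := fun x _ => by ring
    rw [setIntegral_congr_fun measurableSet_Ioo this, integral_sub hip hiq,
      integral_const_mul, hpoly p, hpoly q, mul_zero, sub_zero]
  -- Stone-Weierstrass approximation
  have happrox : ∀ f : C(Set.Icc (0:ℝ) 1, ℝ), ∀ ε > 0, ∃ p : Polynomial ℝ,
      ∀ x : Set.Icc (0:ℝ) 1, |p.eval (x:ℝ) - f x| ≤ ε := by
    intro f ε hε
    have hmem : f ∈ closure (polynomialFunctions (Set.Icc (0:ℝ) 1) : Set C(Set.Icc (0:ℝ) 1, ℝ)) := by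
      rw [← Subalgebra.topologicalClosure_coe, polynomialFunctions_closure_eq_top]
      trivial
    obtain ⟨g, hg, hdist⟩ := Metric.mem_closure_iff.mp hmem ε hε
    obtain ⟨p, -, rfl⟩ := Subalgebra.mem_map.mp hg
    refine ⟨p, fun x => ?_⟩
    have h1 := ContinuousMap.dist_apply_le_dist (f := f) (g := p.toContinuousMapOnAlgHom _) x
    have h2 : dist (f x) ((p.toContinuousMapOnAlgHom _) x) ≤ ε := h1.trans hdist.le
    rw [Real.dist_eq] at h2
    have h3 : ((p.toContinuousMapOnAlgHom (Set.Icc (0:ℝ) 1)) x) = p.eval (x : ℝ) := by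
      simp [Polynomial.toContinuousMapOnAlgHom, Polynomial.toContinuousMapOn,
        Polynomial.toContinuousMap]
    rw [h3] at h2
    rwa [abs_sub_comm]
  -- the L² norm of h vanishes
  have hrest : Continuous ((Set.Icc (0:ℝ) 1).restrict h) := continuousOn_iff_continuous_restrict.mp hcont
  set fre : C(Set.Icc (0:ℝ) 1, ℝ) := ⟨fun x => (h x).re, Complex.continuous_re.comp hrest⟩ with hfre
  set fim : C(Set.Icc (0:ℝ) 1, ℝ) := ⟨fun x => (h x).im, Complex.continuous_im.comp hrest⟩ with hfim
  set I0 : ℂ := ∫ x in Set.Ioo (0:ℝ) 1, (starRingEnd ℂ) (h x) * h x with hI0def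
  have hJkey : ∀ ε > 0, ‖I0‖ ≤ 2 * C * ε := by
    intro ε hε
    obtain ⟨p, hp⟩ := happrox fre ε hε
    obtain ⟨q, hq⟩ := happrox fim ε hε
    set P : ℝ → ℂ := fun x => ((p.eval x : ℝ) : ℂ) - Complex.I * ((q.eval x : ℝ) : ℂ) with hP
    have h1 : IntegrableOn (fun x => (starRingEnd ℂ) (h x) * h x) (Set.Ioo (0:ℝ) 1) :=
      hprodint _ (continuous_star.comp_continuousOn hcont)
    have h2 : IntegrableOn (fun x => P x * h x) (Set.Ioo (0:ℝ) 1) := by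
      apply hprodint
      exact ((Complex.continuous_ofReal.comp p.continuous).sub
        (continuous_const.mul (Complex.continuous_ofReal.comp q.continuous))).continuousOn
    have h3 : ∫ x in Set.Ioo (0:ℝ) 1, ((starRingEnd ℂ) (h x) - P x) * h x = I0 := by
      have : ∀ x ∈ Set.Ioo (0:ℝ) 1, ((starRingEnd ℂ) (h x) - P x) * h x =
          (starRingEnd ℂ) (h x) * h x - P x * h x := fun x _ => by ring
      rw [setIntegral_congr_fun measurableSet_Ioo this, integral_sub h1 h2, hQ p q, sub_zero]
    rw [← h3]
    have hb2 : ∀ x ∈ Set.Ioo (0:ℝ) 1, ‖((starRingEnd ℂ) (h x) - P x) * h x‖ ≤ 2 * ε * C := by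
      intro x hx
      have hxI : x ∈ Set.Icc (0:ℝ) 1 := Set.Ioo_subset_Icc_self hx
      have e1 : (starRingEnd ℂ) (h x) - P x =
          (((h x).re - p.eval x : ℝ) : ℂ) - Complex.I * (((h x).im - q.eval x : ℝ) : ℂ) := by
        rw [hP]
        simp only [Complex.ext_iff, Complex.sub_re, Complex.sub_im, Complex.conj_re,
          Complex.conj_im, Complex.mul_re, Complex.mul_im, Complex.I_re, Complex.I_im,
          Complex.ofReal_re, Complex.ofReal_im, Complex.ofReal_sub]
        constructor <;> ring
      have e2 : ‖(starRingEnd ℂ) (h x) - P x‖ ≤ 2 * ε := by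
        rw [e1]
        calc ‖(((h x).re - p.eval x : ℝ) : ℂ) - Complex.I * (((h x).im - q.eval x : ℝ) : ℂ)‖
            ≤ ‖(((h x).re - p.eval x : ℝ) : ℂ)‖ + ‖Complex.I * (((h x).im - q.eval x : ℝ) : ℂ)‖ :=
              norm_sub_le _ _
          _ ≤ ε + ε := by
              rw [norm_mul]
              simp only [Complex.norm_real, Complex.norm_I, one_mul, Real.norm_eq_abs]
              have h4 := hp ⟨x, hxI⟩
              have h5 := hq ⟨x, hxI⟩
              simp only [fre, fim, ContinuousMap.coe_mk] at h4 h5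
              rw [abs_sub_comm] at h4
              rw [abs_sub_comm] at h5
              exact add_le_add h4 h5
          _ = 2 * ε := by ring
      have e3 : ‖h x‖ ≤ C := (hbound x hxI).trans (by nlinarith [hx.2])
      rw [norm_mul]
      calc ‖(starRingEnd ℂ) (h x) - P x‖ * ‖h x‖ ≤ (2 * ε) * C := by gcongr
        _ = 2 * ε * C := by ring
    have hnorm := norm_setIntegral_le_of_norm_le_const (by simp : volume (Set.Ioo (0:ℝ) 1) < ⊤)
      hb2
    have hv : volume.real (Set.Ioo (0:ℝ) 1) = 1 := by simp [Measure.real, Real.volume_Ioo]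
    rw [hv, mul_one] at hnorm
    calc ‖∫ x in Set.Ioo (0:ℝ) 1, ((starRingEnd ℂ) (h x) - P x) * h x‖ ≤ 2 * ε * C := hnorm
      _ = 2 * C * ε := by ring
  have hI0 : I0 = 0 := by
    by_contra hne
    have hpos : 0 < ‖I0‖ := norm_pos_iff.mpr hne
    set ε := ‖I0‖ / (4 * C + 4) with hεdef
    have h44 : (0:ℝ) < 4 * C + 4 := by linarith
    have hεpos : 0 < ε := by positivity
    have hkey := hJkey ε hεpos
    have hlt : 2 * C * ε < ‖I0‖ := by
      calc 2 * C * ε < (4 * C + 4) * ε := by nlinarith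
        _ = ‖I0‖ := by rw [hεdef]; field_simp
    linarith
  -- h vanishes on (0,1)
  have hreal : I0 = ((∫ x in Set.Ioo (0:ℝ) 1, Complex.normSq (h x) : ℝ) : ℂ) := by
    calc I0 = ∫ x in Set.Ioo (0:ℝ) 1, ((Complex.normSq (h x) : ℝ) : ℂ) := by
          rw [hI0def]
          exact setIntegral_congr_fun measurableSet_Ioo
            (fun x _ => (Complex.normSq_eq_conj_mul_self).symm)
      _ = ((∫ x in Set.Ioo (0:ℝ) 1, Complex.normSq (h x) : ℝ) : ℂ) := integral_ofReal
  have hJr : ∫ x in Set.Ioo (0:ℝ) 1, Complex.normSq (h x) = 0 := by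
    have h6 := hI0
    rw [hreal] at h6
    exact_mod_cast h6
  have hnsint : IntegrableOn (fun x => Complex.normSq (h x)) (Set.Ioo (0:ℝ) 1) :=
    ((Complex.continuous_normSq.comp_continuousOn hcont).integrableOn_Icc).mono_set
      Set.Ioo_subset_Icc_self
  have hae := (setIntegral_eq_zero_iff_of_nonneg_ae
    (Filter.Eventually.of_forall (fun x => Complex.normSq_nonneg _)) hnsint).mp hJr
  have heqon := MeasureTheory.Measure.eqOn_open_of_ae_eq hae isOpen_Ioo
    (Complex.continuous_normSq.comp_continuousOn (hcont.mono Set.Ioo_subset_Icc_self))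
    continuousOn_const
  have hzero : ∀ x ∈ Set.Ioo (0:ℝ) 1, h x = 0 := fun x hx => Complex.normSq_eq_zero.mp (heqon hx)
  -- conclude
  have hpos : ∀ t : ℝ, 0 < t → G t = 0 := by
    intro t ht
    have hx : Real.exp (-t) ∈ Set.Ioo (0:ℝ) 1 :=
      ⟨Real.exp_pos _, Real.exp_lt_one_iff.mpr (by linarith)⟩
    have h7 := hzero _ hx
    rw [hh] at h7
    simp only [Real.log_exp, neg_neg] at h7
    rcases mul_eq_zero.mp h7 with h' | h'
    · exact absurd h' (by
        simpa [Complex.ofReal_eq_zero] using ne_of_gt (Real.rpow_pos_of_pos (Real.exp_pos _) a))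
    · exact h'
  intro t ht
  rcases eq_or_lt_of_le ht with rfl | ht'
  · have l1 : Filter.Tendsto G (nhdsWithin 0 (Set.Ioi 0)) (nhds (G 0)) :=
      (hc 0 Set.self_mem_Ici).mono_left (nhdsWithin_mono 0 Set.Ioi_subset_Ici_self)
    have l2 : Filter.Tendsto G (nhdsWithin 0 (Set.Ioi 0)) (nhds 0) := by
      apply Filter.Tendsto.congr' _ tendsto_const_nhds
      filter_upwards [self_mem_nhdsWithin] with s hs
      exact (hpos s hs).symm
    exact tendsto_nhds_unique l1 l2
  · exact hpos t ht'

/-- Injectivity of the modified Laplace transform `L{F}(ζ) = ζ ∫₀^∞ e^(-ζt) F(t) dt`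
on continuous functions of exponential type `R`. -/
theorem stmt2 (R C : ℝ) (F₁ F₂ : ℝ → ℂ)
    (h₁ : ContinuousOn F₁ (Set.Ici 0)) (h₂ : ContinuousOn F₂ (Set.Ici 0))
    (hb₁ : ∀ t : ℝ, 0 ≤ t → ‖F₁ t‖ ≤ C * Real.exp (R * t))
    (hb₂ : ∀ t : ℝ, 0 ≤ t → ‖F₂ t‖ ≤ C * Real.exp (R * t))
    (heq : ∀ ζ : ℂ, R < ζ.re →
      ζ * ∫ t in Set.Ioi (0 : ℝ), Complex.exp (-ζ * t) * F₁ t =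
      ζ * ∫ t in Set.Ioi (0 : ℝ), Complex.exp (-ζ * t) * F₂ t) :
    ∀ t : ℝ, 0 ≤ t → F₁ t = F₂ t := by
  have hC : 0 ≤ C := le_trans (norm_nonneg (F₁ 0)) (by simpa using hb₁ 0 le_rfl)
  set R' : ℝ := max R 0 + 1 with hR'def
  have hRR' : R < R' := lt_of_le_of_lt (le_max_left R 0) (by linarith [le_refl (max R 0)])
  have key : ∀ t : ℝ, 0 ≤ t → F₁ t - F₂ t = 0 := by
    apply core (C := 2 * C) (R := R') (by positivity) (by linarith)
    · exact h₁.sub h₂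
    · intro t ht
      have e1 : Real.exp (R * t) ≤ Real.exp (R' * t) :=
        Real.exp_le_exp.mpr (mul_le_mul_of_nonneg_right hRR'.le ht)
      calc ‖F₁ t - F₂ t‖ ≤ ‖F₁ t‖ + ‖F₂ t‖ := norm_sub_le _ _
        _ ≤ C * Real.exp (R * t) + C * Real.exp (R * t) := add_le_add (hb₁ t ht) (hb₂ t ht)
        _ = 2 * C * Real.exp (R * t) := by ring
        _ ≤ 2 * C * Real.exp (R' * t) := by
            exact mul_le_mul_of_nonneg_left e1 (by linarith)
    · intro ζ hζ
      have hζR : R < ζ.re := lt_trans hRR' hζ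
      have hζ0 : ζ ≠ 0 := by
        intro h0
        rw [h0] at hζ
        simp at hζ
        linarith [le_max_right R 0, hζ]
      have hI := mul_left_cancel₀ hζ0 (heq ζ hζR)
      have hi₁ := lap_integrable h₁ hb₁ hζR
      have hi₂ := lap_integrable h₂ hb₂ hζR
      have : ∀ t ∈ Set.Ioi (0:ℝ), Complex.exp (-ζ * (t:ℂ)) * (F₁ t - F₂ t) =
          Complex.exp (-ζ * (t:ℂ)) * F₁ t - Complex.exp (-ζ * (t:ℂ)) * F₂ t :=
        fun t _ => mul_sub _ _ _
      rw [setIntegral_congr_fun measurableSet_Ioi this, integral_sub hi₁ hi₂, hI, sub_self]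
  intro t ht
  have := key t ht
  linear_combination this
end

section
/- Under the same hypotheses, the termwise fractional integral satisfies I_α F(t) = (1/(Γ(α+1)·2πi)) ∮_{|ξ|=A} ₂F₁(1,1;α+1; t/ξ) (F(ξ)/ξ) dξ for |t| < A < a and Re(α) > -1. -/
open MeasureTheory

set_option maxHeartbeats 1000000

/-- Pochhammer symbol `(x)_k` over `ℂ`. -/
noncomputable def poch (x : ℂ) (k : ℕ) : ℂ := (ascPochhammer ℂ k).eval x

private lemma poch_one' (k : ℕ) : poch 1 k = (k.factorial : ℂ) := by
  simp [poch]

private lemma poch_succ (x : ℂ) (k : ℕ) : poch x (k + 1) = poch x k * (x + k) := by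
  simp [poch, ascPochhammer_succ_right, Polynomial.eval_mul]

private lemma aux_ne {α : ℂ} (hα : -1 < α.re) (k : ℕ) : α + 1 + (k : ℂ) ≠ 0 := by
  intro h
  have h2 := congrArg Complex.re h
  simp only [Complex.add_re, Complex.one_re, Complex.natCast_re, Complex.zero_re] at h2
  have : (0:ℝ) ≤ (k:ℝ) := Nat.cast_nonneg k
  linarith

private lemma poch_ne_zero {α : ℂ} (hα : -1 < α.re) (k : ℕ) : poch (α + 1) k ≠ 0 := by
  induction k with
  | zero => simp [poch]
  | succ k ih =>
    rw [poch_succ]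
    exact mul_ne_zero ih (aux_ne hα k)

private lemma Gamma_poch {α : ℂ} (hα : -1 < α.re) (k : ℕ) :
    Complex.Gamma (α + 1 + k) = Complex.Gamma (α + 1) * poch (α + 1) k := by
  induction k with
  | zero => simp [poch]
  | succ k ih =>
    have h1 : α + 1 + ((k : ℕ) + 1 : ℕ) = (α + 1 + k) + 1 := by push_cast; ring
    rw [h1, Complex.Gamma_add_one _ (aux_ne hα k), ih, poch_succ]
    ring

private lemma summable_aux {α : ℂ} (hα : -1 < α.re) {r : ℝ} (hr0 : 0 ≤ r) (hr : r < 1) :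
    Summable fun k : ℕ => ‖((k.factorial : ℂ)) / poch (α + 1) k‖ * r ^ k := by
  set r' : ℝ := (1 + r) / 2 with hr'
  have hrr' : r < r' := by rw [hr']; linarith
  have hr'1 : r' < 1 := by rw [hr']; linarith
  have hr'0 : 0 ≤ r' := by rw [hr']; linarith
  obtain ⟨N, hN⟩ := exists_nat_ge ((r - r' * (α.re + 1)) / (r' - r))
  apply summable_of_ratio_norm_eventually_le hr'1
  filter_upwards [Filter.eventually_ge_atTop N] with k hk
  have hkN : ((r - r' * (α.re + 1)) / (r' - r)) ≤ (k : ℝ) :=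
    le_trans hN (Nat.cast_le.mpr hk)
  have hsub : 0 < r' - r := by linarith
  rw [div_le_iff₀ hsub] at hkN
  have hkey : r * ((k : ℝ) + 1) ≤ r' * (α.re + 1 + k) := by nlinarith
  have hB0 : 0 ≤ ‖((k.factorial : ℂ)) / poch (α + 1) k‖ * r ^ k := by positivity
  rw [Real.norm_of_nonneg (by positivity), Real.norm_of_nonneg hB0]
  have hfac : (((k+1).factorial : ℂ)) = ((k : ℂ) + 1) * (k.factorial : ℂ) := by
    push_cast [Nat.factorial_succ]; ring
  have hnormc : ‖(((k+1).factorial : ℂ)) / poch (α + 1) (k + 1)‖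
      = ‖((k : ℂ) + 1) / (α + 1 + k)‖ * ‖((k.factorial : ℂ)) / poch (α + 1) k‖ := by
    rw [poch_succ, hfac, mul_comm (poch (α + 1) k) (α + 1 + (k:ℂ)), mul_div_mul_comm, norm_mul]
  rw [hnormc]
  have hnum : ‖((k : ℂ) + 1)‖ = (k : ℝ) + 1 := by
    have : ((k : ℂ) + 1) = (((k + 1 : ℕ)) : ℂ) := by push_cast; ring
    rw [this, Complex.norm_natCast]; push_cast; ring
  have hden : (α.re + 1 + k) ≤ ‖α + 1 + (k : ℂ)‖ := by
    have h := Complex.re_le_norm (α + 1 + k)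
    simpa only [Complex.add_re, Complex.one_re, Complex.natCast_re] using h
  have hdenpos : (0:ℝ) < α.re + 1 + k := by
    have : (0:ℝ) ≤ (k:ℝ) := Nat.cast_nonneg k
    linarith
  have hDpos : (0:ℝ) < ‖α + 1 + (k : ℂ)‖ := lt_of_lt_of_le hdenpos hden
  have hfrac : r * ((k : ℝ) + 1) / ‖α + 1 + (k : ℂ)‖ ≤ r' := by
    rw [div_le_iff₀ hDpos]
    calc r * ((k:ℝ) + 1) ≤ r' * (α.re + 1 + k) := hkey
      _ ≤ r' * ‖α + 1 + (k : ℂ)‖ := mul_le_mul_of_nonneg_left hden hr'0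
  rw [norm_div, hnum]
  calc ((k:ℝ) + 1) / ‖α + 1 + (k : ℂ)‖ * ‖((k.factorial : ℂ)) / poch (α + 1) k‖ * r ^ (k + 1)
      = (r * ((k:ℝ) + 1) / ‖α + 1 + (k : ℂ)‖) * (‖((k.factorial : ℂ)) / poch (α + 1) k‖ * r ^ k) := by
        rw [pow_succ]; ring
    _ ≤ r' * (‖((k.factorial : ℂ)) / poch (α + 1) k‖ * r ^ k) :=
        mul_le_mul_of_nonneg_right hfrac (by positivity)

/-- Under the same Hardy-class hypotheses as for the fractional derivative, the
termwise fractional integral has the contour-integral representation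
`I_α F(t) = (1/(Γ(α+1) 2πi)) ∮_{|ξ|=A} ₂F₁(1,1;α+1;t/ξ) F(ξ)/ξ dξ` for
`|t| < A < a` and `Re α > -1`. -/
theorem stmt15 (a : ℝ) (ha : 0 < a) (F : ℂ → ℂ)
    (hF : AnalyticOn ℂ F (Metric.ball 0 a)) (M : ℝ)
    (hH1 : ∀ A : ℝ, 0 < A → A < a →
      (∫ θ in (0 : ℝ)..(2 * Real.pi), ‖F (circleMap 0 A θ)‖) ≤ M)
    (α : ℂ) (hα : -1 < α.re) (t : ℂ) (A : ℝ) (htA : ‖t‖ < A) (hA : A < a) :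
    ∑' k : ℕ, ((k.factorial : ℂ) / Complex.Gamma (α + k + 1)) *
        (iteratedDeriv k F 0 / (k.factorial : ℂ)) * t ^ k =
      (1 / (Complex.Gamma (α + 1) * (2 * Real.pi * Complex.I))) *
        ∮ ξ in C(0, A),
          (∑' k : ℕ, (poch 1 k * poch 1 k) /
            (poch (α + 1) k * (k.factorial : ℂ)) * (t / ξ) ^ k) * F ξ / ξ := by
  classical
  have hA0 : 0 < A := lt_of_le_of_lt (norm_nonneg t) htA
  have hr0 : (0:ℝ) ≤ ‖t‖ / A := by positivity
  have hr1 : ‖t‖ / A < 1 := (div_lt_one hA0).mpr htA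
  have h2pi : (2 * (Real.pi : ℂ) * Complex.I) ≠ 0 := by
    simp [Real.pi_ne_zero, Complex.I_ne_zero, Complex.ofReal_ne_zero]
  -- analytic facts
  have hF' : AnalyticOnNhd ℂ F (Metric.ball 0 a) :=
    (Metric.isOpen_ball.analyticOn_iff_analyticOnNhd).mp hF
  have hdiff : DifferentiableOn ℂ F (Metric.closedBall 0 A) :=
    (hF'.differentiableOn).mono (Metric.closedBall_subset_ball hA)
  set p := cauchyPowerSeries F 0 A with hp
  have hps : HasFPowerSeriesOnBall F p 0 (ENNReal.ofNNReal ⟨A, hA0.le⟩) := by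
    refine DifferentiableOn.hasFPowerSeriesOnBall (R := ⟨A, hA0.le⟩) ?_ ?_
    · exact hdiff
    · exact_mod_cast hA0
  set q : ℕ → ℂ := fun k => p k (fun _ => (1:ℂ)) with hqdef
  have hq : ∀ k, iteratedDeriv k F 0 / (k.factorial : ℂ) = q k := by
    intro k
    rw [iteratedDeriv_eq_iteratedFDeriv, ← hps.factorial_smul (1 : ℂ) k, nsmul_eq_mul]
    exact mul_div_cancel_left₀ _ (by exact_mod_cast k.factorial_ne_zero)
  have hq2 : ∀ k, (∮ z in C(0, A), (z : ℂ)⁻¹ ^ k * (z⁻¹ * F z)) =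
      (2 * Real.pi * Complex.I) * q k := by
    intro k
    have h2 := cauchyPowerSeries_apply F 0 A k 1
    simp only [sub_zero, one_div, smul_eq_mul] at h2
    rw [hqdef]
    simp only [hp]
    rw [h2, ← mul_assoc, mul_inv_cancel₀ h2pi, one_mul]
  -- continuity
  have hne0 : ∀ θ : ℝ, circleMap 0 A θ ≠ 0 := fun θ => circleMap_ne_center hA0.ne'
  have hmem : ∀ θ : ℝ, circleMap 0 A θ ∈ Metric.ball (0:ℂ) a := by
    intro θ
    rw [mem_ball_zero_iff, norm_circleMap_zero, abs_of_pos hA0]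
    exact hA
  have hFc : Continuous fun θ : ℝ => F (circleMap 0 A θ) := by
    refine continuous_iff_continuousAt.mpr fun θ => ?_
    exact ((hF' _ (hmem θ)).continuousAt).comp (continuous_circleMap 0 A).continuousAt
  have hcont : ∀ k : ℕ, Continuous fun θ : ℝ =>
      deriv (circleMap 0 A) θ * (poch 1 k * poch 1 k /
        (poch (α + 1) k * (k.factorial : ℂ)) * (t / circleMap 0 A θ) ^ k *
        F (circleMap 0 A θ) / circleMap 0 A θ) := by
    intro k
    have hd : (deriv (circleMap 0 A)) = fun θ => circleMap 0 A θ * Complex.I :=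
      funext (deriv_circleMap 0 A)
    rw [hd]
    refine ((continuous_circleMap 0 A).mul continuous_const).mul ?_
    refine Continuous.div ?_ (continuous_circleMap 0 A) hne0
    exact ((continuous_const.mul
      ((continuous_const.div (continuous_circleMap 0 A) hne0).pow k)).mul hFc)
  set g : ℕ → C(ℝ, ℂ) := fun k =>
    ⟨fun θ => deriv (circleMap 0 A) θ * (poch 1 k * poch 1 k /
        (poch (α + 1) k * (k.factorial : ℂ)) * (t / circleMap 0 A θ) ^ k *
        F (circleMap 0 A θ) / circleMap 0 A θ), hcont k⟩ with hgdef
  set K : TopologicalSpace.Compacts ℝ :=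
    ⟨Set.uIcc 0 (2 * Real.pi), isCompact_uIcc⟩ with hKdef
  set Fc : C(ℝ, ℂ) := ⟨fun θ => F (circleMap 0 A θ), hFc⟩ with hFcdef
  set C := ‖Fc.restrict K‖ with hCdef
  have hC0 : (0:ℝ) ≤ C := norm_nonneg _
  have hCb : ∀ θ ∈ Set.uIcc (0:ℝ) (2 * Real.pi), ‖F (circleMap 0 A θ)‖ ≤ C := by
    intro θ hθ
    have := (Fc.restrict K).norm_coe_le_norm ⟨θ, hθ⟩
    exact this
  set b : ℕ → ℂ := fun k => (k.factorial : ℂ) / poch (α + 1) k with hbdef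
  have hb : ∀ k, poch 1 k * poch 1 k / (poch (α + 1) k * (k.factorial : ℂ)) = b k := by
    intro k
    rw [poch_one', hbdef, mul_comm (poch (α + 1) k) ((k.factorial : ℂ))]
    exact mul_div_mul_left _ _ (by exact_mod_cast k.factorial_ne_zero)
  have hznorm : ∀ θ : ℝ, ‖circleMap 0 A θ‖ = A := by
    intro θ
    rw [norm_circleMap_zero, abs_of_pos hA0]
  have hgnorm : ∀ (k : ℕ) (θ : ℝ),
      ‖g k θ‖ = ‖b k‖ * (‖t‖ / A) ^ k * ‖F (circleMap 0 A θ)‖ := by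
    intro k θ
    simp only [hgdef, ContinuousMap.coe_mk]
    rw [hb k, deriv_circleMap]
    rw [norm_mul, norm_mul, Complex.norm_I, mul_one, hznorm θ]
    simp only [norm_div, norm_mul, norm_pow, hznorm θ]
    field_simp
  have hgle : ∀ (k : ℕ), ∀ θ ∈ Set.uIcc (0:ℝ) (2 * Real.pi),
      ‖g k θ‖ ≤ C * (‖b k‖ * (‖t‖ / A) ^ k) := by
    intro k θ hθ
    rw [hgnorm k θ]
    calc ‖b k‖ * (‖t‖ / A) ^ k * ‖F (circleMap 0 A θ)‖
        ≤ ‖b k‖ * (‖t‖ / A) ^ k * C :=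
          mul_le_mul_of_nonneg_left (hCb θ hθ) (by positivity)
      _ = C * (‖b k‖ * (‖t‖ / A) ^ k) := by ring
  have hsum0 : Summable fun k : ℕ => ‖b k‖ * (‖t‖ / A) ^ k := summable_aux hα hr0 hr1
  have hsum_norm : Summable fun k : ℕ => ‖(g k).restrict K‖ := by
    refine Summable.of_nonneg_of_le (fun k => norm_nonneg _) (fun k => ?_) (hsum0.mul_left C)
    rw [ContinuousMap.norm_le _ (by positivity)]
    rintro ⟨θ, hθ⟩
    exact hgle k θ hθ
  -- the interchange of sum and integral
  have h := intervalIntegral.tsum_intervalIntegral_eq_of_summable_norm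
    (a := (0:ℝ)) (b := 2 * Real.pi) hsum_norm
  have hswap : (∮ ξ in C(0, A),
      (∑' k : ℕ, poch 1 k * poch 1 k / (poch (α + 1) k * (k.factorial : ℂ)) * (t / ξ) ^ k) *
        F ξ / ξ)
      = ∑' k : ℕ, ∮ ξ in C(0, A),
          poch 1 k * poch 1 k / (poch (α + 1) k * (k.factorial : ℂ)) * (t / ξ) ^ k * F ξ / ξ := by
    simp only [circleIntegral, smul_eq_mul]
    calc (∫ θ in (0:ℝ)..2 * Real.pi, deriv (circleMap 0 A) θ *
            ((∑' k : ℕ, poch 1 k * poch 1 k / (poch (α + 1) k * (k.factorial : ℂ)) *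
              (t / circleMap 0 A θ) ^ k) * F (circleMap 0 A θ) / circleMap 0 A θ))
        = ∫ θ in (0:ℝ)..2 * Real.pi, ∑' k : ℕ, (g k) θ := by
          congr 1
          funext θ
          rw [← tsum_mul_right, ← tsum_div_const, ← tsum_mul_left]
          simp only [hgdef, ContinuousMap.coe_mk]
      _ = ∑' k : ℕ, ∫ θ in (0:ℝ)..2 * Real.pi, (g k) θ := h.symm
      _ = ∑' k : ℕ, ∫ θ in (0:ℝ)..2 * Real.pi, deriv (circleMap 0 A) θ *
            (poch 1 k * poch 1 k / (poch (α + 1) k * (k.factorial : ℂ)) *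
              (t / circleMap 0 A θ) ^ k * F (circleMap 0 A θ) / circleMap 0 A θ) := by
          refine tsum_congr fun k => ?_
          congr 1
  -- evaluate each term
  have hterm : ∀ k : ℕ, (∮ ξ in C(0, A),
      poch 1 k * poch 1 k / (poch (α + 1) k * (k.factorial : ℂ)) * (t / ξ) ^ k * F ξ / ξ)
      = b k * t ^ k * ((2 * Real.pi * Complex.I) * q k) := by
    intro k
    have heq : ∀ ξ : ℂ, poch 1 k * poch 1 k / (poch (α + 1) k * (k.factorial : ℂ)) *
        (t / ξ) ^ k * F ξ / ξ = (b k * t ^ k) * (ξ⁻¹ ^ k * (ξ⁻¹ * F ξ)) := by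
      intro ξ
      rw [hb k]
      field_simp
      ring
    calc (∮ ξ in C(0, A),
          poch 1 k * poch 1 k / (poch (α + 1) k * (k.factorial : ℂ)) * (t / ξ) ^ k * F ξ / ξ)
        = ∮ ξ in C(0, A), (b k * t ^ k) * (ξ⁻¹ ^ k * (ξ⁻¹ * F ξ)) := by
          congr 1; funext ξ; exact heq ξ
      _ = (b k * t ^ k) * ∮ ξ in C(0, A), ξ⁻¹ ^ k * (ξ⁻¹ * F ξ) :=
          circleIntegral.integral_const_mul _ _ _ _
      _ = b k * t ^ k * ((2 * Real.pi * Complex.I) * q k) := by rw [hq2 k]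
  have hG : Complex.Gamma (α + 1) ≠ 0 :=
    Complex.Gamma_ne_zero_of_re_pos (by simp [Complex.add_re]; linarith)
  have hmain : (1 / (Complex.Gamma (α + 1) * (2 * Real.pi * Complex.I))) *
      ∑' k : ℕ, (b k * t ^ k * ((2 * Real.pi * Complex.I) * q k))
      = ∑' k : ℕ, ((k.factorial : ℂ) / Complex.Gamma (α + k + 1)) * q k * t ^ k := by
    rw [← tsum_mul_left]
    refine tsum_congr fun k => ?_
    have hgam : Complex.Gamma (α + k + 1) = Complex.Gamma (α + 1) * poch (α + 1) k := by
      rw [show (α + (k:ℂ) + 1) = α + 1 + k by ring]; exact Gamma_poch hα k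
    rw [hgam]
    simp only [hbdef]
    have hpk := poch_ne_zero hα k
    field_simp
  rw [hswap, tsum_congr hterm, hmain]
  exact tsum_congr fun k => by rw [hq k]
end

section
/- Analyticity in α: for fixed t with |t| < a and F analytic on |t| < a with coefficients f_k, the function α ↦ D_α F(t)/Γ(α+1) = Σ_{k≥0} ((α+1)_k/k!) f_k t^k extends to an entire function of α, and its value at α = −n−1 (n a nonnegative integer) equals Ψ_n(t) = Σ_{j=0}^n (−1)^j binom(n,j) f_j t^j. -/
open Finset

lemma poch_norm_le (k : ℕ) (x : ℂ) (y : ℝ) (h : ‖x‖ ≤ y) :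
    ‖(ascPochhammer ℂ k).eval x‖ ≤ (ascPochhammer ℝ k).eval y := by
  induction k with
  | zero => simp
  | succ k ih =>
    rw [ascPochhammer_succ_eval, ascPochhammer_succ_eval, norm_mul]
    have h1 : ‖x + (k : ℂ)‖ ≤ y + k := by
      refine (norm_add_le _ _).trans ?_
      simp only [Complex.norm_natCast]
      linarith
    exact mul_le_mul ih h1 (norm_nonneg _) ((norm_nonneg _).trans ih)

lemma gamma_poch (α : ℂ) (hα : -1 < α.re) (k : ℕ) :
    Complex.Gamma (α + 1) * (ascPochhammer ℂ k).eval (α + 1) = Complex.Gamma (α + k + 1) := by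
  induction k with
  | zero => simp
  | succ k ih =>
    rw [ascPochhammer_succ_eval, ← mul_assoc, ih]
    have hne : α + k + 1 ≠ 0 := by
      intro h
      have := congrArg Complex.re h
      simp [Complex.add_re] at this
      have h0 : (0:ℝ) ≤ (k:ℝ) := Nat.cast_nonneg k
      linarith [congrArg Complex.re h]
    have hG := Complex.Gamma_add_one _ hne
    push_cast
    rw [show α + ((k:ℂ) + 1) + 1 = (α + k + 1) + 1 by ring, hG]
    ring

lemma poch_neg (n j : ℕ) :
    (ascPochhammer ℂ j).eval (-(n : ℂ)) / (j.factorial : ℂ) = (-1:ℂ)^j * (n.choose j : ℂ) := by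
  rw [ascPochhammer_eval_neg_eq_descPochhammer, descPochhammer_eval_eq_descFactorial,
    Nat.descFactorial_eq_factorial_mul_choose]
  have : (j.factorial : ℂ) ≠ 0 := Nat.cast_ne_zero.mpr j.factorial_ne_zero
  field_simp
  push_cast
  ring

lemma poch_nonneg (k : ℕ) (R : ℝ) (hR : 0 ≤ R) : 0 ≤ (ascPochhammer ℝ k).eval R := by
  induction k with
  | zero => simp
  | succ k ih =>
    rw [ascPochhammer_succ_eval]
    have : (0:ℝ) ≤ R + k := by positivity
    positivity

lemma v_summable (R : ℝ) (hR : 0 ≤ R) (q : ℝ) (hq0 : 0 ≤ q) (hq : q < 1) :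
    Summable (fun k : ℕ => (ascPochhammer ℝ k).eval R / (k.factorial : ℝ) * q ^ k) := by
  set r := (q + 1) / 2 with hr
  have hqr : q < r := by rw [hr]; linarith
  have hr1 : r < 1 := by rw [hr]; linarith
  have hr0 : 0 < r := by rw [hr]; linarith
  apply summable_of_ratio_norm_eventually_le hr1
  obtain ⟨N, hN⟩ : ∃ N : ℕ, (R + N) * q ≤ r * (N + 1) := by
    rcases eq_or_lt_of_le hq0 with h | h
    · exact ⟨0, by nlinarith⟩
    · obtain ⟨N, hN⟩ := exists_nat_gt ((R * q - r) / (r - q))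
      refine ⟨N, ?_⟩
      have h2 : R * q - r < N * (r - q) := by
        rw [div_lt_iff₀ (by linarith)] at hN; linarith
      nlinarith
  filter_upwards [Filter.eventually_ge_atTop N] with k hk
  have hkN : (N:ℝ) ≤ k := Nat.cast_le.mpr hk
  have key : (R + k) * q ≤ r * (k + 1) := by nlinarith
  have hP : 0 ≤ (ascPochhammer ℝ k).eval R := poch_nonneg k R hR
  have hk1 : (0:ℝ) < (k:ℝ) + 1 := by positivity
  have hfac : (0:ℝ) < (k.factorial : ℝ) := by exact_mod_cast k.factorial_pos
  have hA : 0 ≤ (ascPochhammer ℝ k).eval R / (k.factorial : ℝ) * q ^ k := by positivity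
  rw [Real.norm_eq_abs, Real.norm_eq_abs, ascPochhammer_succ_eval, Nat.factorial_succ]
  rw [abs_of_nonneg (by push_cast; positivity), abs_of_nonneg hA]
  have expand : (ascPochhammer ℝ k).eval R * (R + k) / ((k+1) * k.factorial : ℕ) * q ^ (k+1)
      = ((ascPochhammer ℝ k).eval R / (k.factorial : ℝ) * q ^ k) * ((R + k) * q) / ((k:ℝ)+1) := by
    push_cast
    field_simp
    ring
  rw [expand, div_le_iff₀ hk1]
  calc ((ascPochhammer ℝ k).eval R / (k.factorial : ℝ) * q ^ k) * ((R + k) * q)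
      ≤ ((ascPochhammer ℝ k).eval R / (k.factorial : ℝ) * q ^ k) * (r * (k + 1)) :=
        mul_le_mul_of_nonneg_left key hA
    _ = r * ((ascPochhammer ℝ k).eval R / (k.factorial : ℝ) * q ^ k) * ((k:ℝ)+1) := by ring



/-- Analyticity in the order `α`: for fixed `t` with `|t| < a` and Taylor
coefficients `f_k` of radius of convergence at least `a`, the function
`α ↦ D_α F(t)/Γ(α+1) = ∑ ((α+1)_k / k!) f_k t^k` is an entire function of `α`,
it agrees with `∑ (Γ(α+k+1)/(k! Γ(α+1))) f_k t^k` where `Re α > -1`, and its value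
at `α = -n-1` equals `Ψ_n(t) = ∑_{j=0}^n (-1)^j (n choose j) f_j t^j`. -/
theorem stmt16 (a : ℝ) (f : ℕ → ℂ)
    (hf : ∀ z : ℂ, ‖z‖ < a → Summable fun k => ‖f k‖ * ‖z‖ ^ k)
    (t : ℂ) (ht : ‖t‖ < a) :
    Differentiable ℂ (fun α : ℂ =>
      ∑' k : ℕ, ((ascPochhammer ℂ k).eval (α + 1) / (k.factorial : ℂ)) * f k * t ^ k) ∧
    (∀ α : ℂ, -1 < α.re →
      Complex.Gamma (α + 1) *
        ∑' k : ℕ, ((ascPochhammer ℂ k).eval (α + 1) / (k.factorial : ℂ)) * f k * t ^ k =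
      ∑' k : ℕ, (Complex.Gamma (α + k + 1) / (k.factorial : ℂ)) * f k * t ^ k) ∧
    (∀ n : ℕ,
      ∑' k : ℕ, ((ascPochhammer ℂ k).eval ((-(n : ℂ) - 1) + 1) / (k.factorial : ℂ)) *
          f k * t ^ k =
        ∑ j ∈ Finset.range (n + 1), (-1 : ℂ) ^ j * (n.choose j : ℂ) * f j * t ^ j) := by
  have ht0 : 0 ≤ ‖t‖ := norm_nonneg t
  set r : ℝ := (‖t‖ + a) / 2 with hrdef
  have hr0 : 0 < r := by rw [hrdef]; linarith
  have htr : ‖t‖ < r := by rw [hrdef]; linarith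
  have hra : r < a := by rw [hrdef]; linarith
  set q : ℝ := ‖t‖ / r with hqdef
  have hq0 : 0 ≤ q := by positivity
  have hq1 : q < 1 := by rw [hqdef, div_lt_one hr0]; exact htr
  have htqr : ‖t‖ = q * r := by rw [hqdef]; field_simp
  have hfr : Summable fun k => ‖f k‖ * r ^ k := by
    have hnr : ‖(r:ℂ)‖ = r := by rw [Complex.norm_real, Real.norm_eq_abs, abs_of_pos hr0]
    have := hf (r : ℂ) (by rw [hnr]; exact hra)
    rw [hnr] at this
    exact this
  refine ⟨?_, ?_, ?_⟩
  · -- Differentiability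
    intro α₀
    set R : ℝ := ‖α₀‖ + 1 with hRdef
    have hR0 : 0 ≤ R + 1 := by positivity
    have hv := v_summable (R + 1) hR0 q hq0 hq1
    set C : ℝ := ∑' k : ℕ, (ascPochhammer ℝ k).eval (R + 1) / (k.factorial : ℝ) * q ^ k with hC
    have hvC : ∀ k : ℕ, (ascPochhammer ℝ k).eval (R + 1) / (k.factorial : ℝ) * q ^ k ≤ C := by
      intro k
      refine hv.le_tsum k fun j _ => ?_
      have := poch_nonneg j (R + 1) hR0
      positivity
    have hDU : DifferentiableOn ℂ (fun α : ℂ =>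
        ∑' k : ℕ, ((ascPochhammer ℂ k).eval (α + 1) / (k.factorial : ℂ)) * f k * t ^ k)
        (Metric.ball 0 R) := by
      apply Complex.differentiableOn_tsum_of_summable_norm
        (u := fun k => C * (‖f k‖ * r ^ k)) (hfr.mul_left C)
      · intro k
        apply Differentiable.differentiableOn
        have : Differentiable ℂ fun α : ℂ => (ascPochhammer ℂ k).eval (α + 1) :=
          (ascPochhammer ℂ k).differentiable.comp (differentiable_id.add_const 1)
        exact ((this.div_const _).mul_const _).mul_const _
      · exact Metric.isOpen_ball
      · intro k w hw
        have hwR : ‖w + 1‖ ≤ R + 1 := by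
          calc ‖w + 1‖ ≤ ‖w‖ + 1 := by
                simpa using norm_add_le w 1
            _ ≤ R + 1 := by
                have : ‖w‖ < R := by simpa [Metric.mem_ball] using hw
                linarith
        have hb := poch_norm_le k (w + 1) (R + 1) hwR
        have hfac : (0:ℝ) < (k.factorial : ℝ) := by exact_mod_cast k.factorial_pos
        calc ‖(ascPochhammer ℂ k).eval (w + 1) / (k.factorial : ℂ) * f k * t ^ k‖
            = ‖(ascPochhammer ℂ k).eval (w + 1)‖ / (k.factorial : ℝ) * ‖f k‖ * ‖t‖ ^ k := by
              simp [norm_mul, norm_div, norm_pow, Complex.norm_natCast]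
          _ ≤ (ascPochhammer ℝ k).eval (R + 1) / (k.factorial : ℝ) * ‖f k‖ * ‖t‖ ^ k := by
              gcongr
          _ = ((ascPochhammer ℝ k).eval (R + 1) / (k.factorial : ℝ) * q ^ k) * (‖f k‖ * r ^ k) := by
              rw [htqr, mul_pow]; ring
          _ ≤ C * (‖f k‖ * r ^ k) := by
              have h1 : 0 ≤ ‖f k‖ * r ^ k := by positivity
              exact mul_le_mul_of_nonneg_right (hvC k) h1
    exact hDU.differentiableAt (Metric.isOpen_ball.mem_nhds
      (by simp only [Metric.mem_ball, dist_zero_right, hRdef]; linarith))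
  · -- Gamma identity
    intro α hα
    rw [← tsum_mul_left]
    refine tsum_congr fun k => ?_
    have hg := gamma_poch α hα k
    calc Complex.Gamma (α + 1) * ((ascPochhammer ℂ k).eval (α + 1) / (k.factorial : ℂ) * f k * t ^ k)
        = (Complex.Gamma (α + 1) * (ascPochhammer ℂ k).eval (α + 1)) / (k.factorial : ℂ) * f k * t ^ k := by
          ring
      _ = Complex.Gamma (α + k + 1) / (k.factorial : ℂ) * f k * t ^ k := by rw [hg]
  · -- value at α = -n-1
    intro n
    have harg : (-(n : ℂ) - 1) + 1 = -(n : ℂ) := by ring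
    simp only [harg]
    rw [tsum_eq_sum (s := Finset.range (n + 1)) (fun k hk => by
      have hkn : n < k := by simpa [Nat.lt_succ_iff, Nat.succ_le_iff] using hk
      rw [ascPochhammer_eval_neg_coe_nat_of_lt hkn]
      simp)]
    refine Finset.sum_congr rfl fun j hj => ?_
    rw [poch_neg n j]
end
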